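/- A ring R is weakly semicommutative if and only if the polynomial ring R[x] is weakly semicommutative, under the assumption that R is Armendariz. -/

import Mathlib

def WeaklySemicommutative (R : Type*) [Ring R] : Prop :=
  ∀ a b : R, a * b = 0 → ∀ r : R, IsNilpotent (a * r * b)

def IsArmendariz (R : Type*) [Ring R] : Prop :=
  ∀ f g : Polynomial R, f * g = 0 → ∀ i j : ℕ, f.coeff i * g.coeff j = 0

open Polynomial

section Aux

variable {R : Type*} [Ring R]

/-- Key consequence of the Armendariz condition: if `p*q = 0`, `r*s = 0` and
`p*s = r*q`, then `p*s = 0`. -/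
theorem armendariz_W (hA : IsArmendariz R) {p q r s : R}
    (hpq : p * q = 0) (hrs : r * s = 0) (h : p * s = r * q) : p * s = 0 := by
  have e1 : C p * C q = 0 := by rw [← C_mul, hpq, C_0]
  have e2 : C r * C s = 0 := by rw [← C_mul, hrs, C_0]
  have e3 : C p * C s = C r * C q := by rw [← C_mul, ← C_mul, h]
  have hfg : (C p + C r * X) * (C q - C s * X) = 0 := by
    have expand : (C p + C r * X) * (C q - C s * X)
        = C p * C q + (C r * C q - C p * C s) * X - C r * C s * (X * X) := by
      have c1 : C r * X * C q = C r * C q * X := by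
        rw [mul_assoc, X_mul, ← mul_assoc]
      have c2 : C r * X * (C s * X) = C r * C s * (X * X) := by
        rw [mul_assoc, ← mul_assoc X (C s) X, X_mul, mul_assoc, ← mul_assoc, ← mul_assoc]
      rw [add_mul, mul_sub, mul_sub, c1, c2, sub_mul, ← mul_assoc (C p) (C s) X]
      abel
    rw [expand, e1, e2, e3, sub_self, zero_mul, zero_add, zero_mul, sub_zero]
  have := hA _ _ hfg 0 1
  simpa using this

/-- Insertion lemma: in an Armendariz ring one may insert a power of a nilpotent
element into a zero product. -/
theorem armendariz_insert (hA : IsArmendariz R) {y A B : R} {k : ℕ} (hy : y ^ k = 0)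
    (hAB : A * B = 0) : ∀ e, 0 < e → A * y ^ e * B = 0 := by
  suffices H : ∀ d e, 0 < e → k - e ≤ d → A * y ^ e * B = 0 by
    intro e he; exact H k e he (Nat.sub_le _ _)
  intro d
  induction d with
  | zero =>
    intro e he hd
    have hke : k ≤ e := by omega
    have : y ^ e = 0 := by
      rw [← Nat.add_sub_cancel' hke, pow_add, hy, zero_mul]
    rw [this, mul_zero, zero_mul]
  | succ d ih =>
    intro e he hd
    rcases le_or_gt k e with hke | hek
    · have : y ^ e = 0 := by
        rw [← Nat.add_sub_cancel' hke, pow_add, hy, zero_mul]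
      rw [this, mul_zero, zero_mul]
    · have h2e : A * y ^ (e + e) * B = 0 := ih (e + e) (by omega) (by omega)
      have hrs : (A * y ^ e) * (y ^ e * B) = 0 := by
        calc (A * y ^ e) * (y ^ e * B) = A * y ^ (e + e) * B := by
              rw [pow_add]; noncomm_ring
          _ = 0 := h2e
      have := armendariz_W hA hAB hrs (by noncomm_ring)
      calc A * y ^ e * B = A * (y ^ e * B) := by rw [mul_assoc]
        _ = 0 := this

open Classical in
/-- Number of occurrences of `y` in a list (classical, to avoid `DecidableEq`). -/
noncomputable def nilCount (y : R) : List R → ℕ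
  | [] => 0
  | z :: l => (if z = y then 1 else 0) + nilCount y l

open Classical in
theorem nilCount_cons (y z : R) (l : List R) :
    nilCount y (z :: l) = (if z = y then 1 else 0) + nilCount y l := rfl

theorem nilCount_append (y : R) (l₁ l₂ : List R) :
    nilCount y (l₁ ++ l₂) = nilCount y l₁ + nilCount y l₂ := by
  induction l₁ with
  | nil => simp [nilCount]
  | cons z l ih => simp only [List.cons_append, nilCount_cons, ih]; omega

theorem nilCount_le_length (y : R) (l : List R) : nilCount y l ≤ l.length := by
  induction l with
  | nil => simp [nilCount]
  | cons z l ih =>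
    rw [nilCount_cons]
    split <;> simp <;> omega

/-- In an Armendariz ring, a product of nilpotent elements in which some `y`
with `y ^ k = 0` occurs at least `k` times is zero. -/
theorem prod_eq_zero_of_nilCount (hA : IsArmendariz R) {y : R} {k : ℕ} (hy : y ^ k = 0)
    (l : List R) (hnil : ∀ z ∈ l, IsNilpotent z) (hcount : k ≤ nilCount y l) :
    l.prod = 0 := by
  suffices H : ∀ n (l : List R), l.length = n → (∀ z ∈ l, IsNilpotent z) →
      k ≤ nilCount y l → l.prod = 0 from H l.length l rfl hnil hcount
  intro n
  induction n using Nat.strong_induction_on with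
  | _ n ih =>
    intro l hlen hnil hcount
    by_cases hall : ∀ z ∈ l, z = y
    · have hprod : l.prod = y ^ l.length := List.prod_eq_pow_card l y hall
      have hk : k ≤ l.length := le_trans hcount (nilCount_le_length y l)
      rw [hprod, ← Nat.add_sub_cancel' hk, pow_add, hy, zero_mul]
    · push_neg at hall
      obtain ⟨z, hz, hzy⟩ := hall
      obtain ⟨l₁, l₂, rfl⟩ := List.append_of_mem hz
      have hlen' : (l₁ ++ l₂).length < n := by
        subst hlen; simp
      have hcount' : k ≤ nilCount y (l₁ ++ l₂) := by
        have : nilCount y (l₁ ++ z :: l₂) = nilCount y (l₁ ++ l₂) := by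
          rw [nilCount_append, nilCount_append, nilCount_cons, if_neg hzy, zero_add]
        omega
      have hnil' : ∀ w ∈ l₁ ++ l₂, IsNilpotent w := by
        intro w hw
        exact hnil w (by simp at hw ⊢; tauto)
      have hAB : l₁.prod * l₂.prod = 0 := by
        have := ih _ hlen' (l₁ ++ l₂) rfl hnil' hcount'
        rwa [List.prod_append] at this
      obtain ⟨kz, hkz⟩ := hnil z hz
      have hins := armendariz_insert hA hkz hAB 1 one_pos
      rw [pow_one] at hins
      rw [List.prod_append, List.prod_cons, ← mul_assoc, hins]

/-- Noncommutative expansion of a power of a finite sum as a sum over words. -/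
theorem sum_pow_ofFn {S : Type*} [Ring S] {κ : Type*} [Fintype κ] (m : κ → S) (T : ℕ) :
    (∑ s, m s) ^ T = ∑ σ : Fin T → κ, (List.ofFn fun t => m (σ t)).prod := by
  induction T with
  | zero => simp [List.ofFn_zero]
  | succ T ih =>
    rw [pow_succ', ih, Finset.sum_mul_sum]
    have h1 : (∑ p : κ × (Fin T → κ), m p.1 * (List.ofFn fun t => m (p.2 t)).prod)
        = ∑ i : κ, ∑ j : Fin T → κ, m i * (List.ofFn fun t => m (j t)).prod :=
      Fintype.sum_prod_type _
    rw [← h1]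
    exact Fintype.sum_equiv (Fin.consEquiv (fun _ => κ)) _ _ (by
      intro sσ
      rw [List.ofFn_succ, List.prod_cons]
      simp [Fin.consEquiv])

theorem prod_map_C_mul_X_pow (l : List (R × ℕ)) :
    (l.map fun p => (C p.1 : R[X]) * X ^ p.2).prod
      = C ((l.map Prod.fst).prod) * X ^ ((l.map Prod.snd).sum) := by
  induction l with
  | nil => simp
  | cons p l ih =>
    simp only [List.map_cons, List.prod_cons, List.sum_cons, ih]
    rw [show (C p.1 * X ^ p.2) * (C (List.map Prod.fst l).prod * X ^ (List.map Prod.snd l).sum)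
          = C p.1 * (X ^ p.2 * C (List.map Prod.fst l).prod) * X ^ (List.map Prod.snd l).sum by
        noncomm_ring,
      X_pow_mul,
      show C p.1 * (C (List.map Prod.fst l).prod * X ^ p.2) * X ^ (List.map Prod.snd l).sum
          = (C p.1 * C (List.map Prod.fst l).prod) * (X ^ p.2 * X ^ (List.map Prod.snd l).sum) by
        noncomm_ring,
      ← C_mul, ← pow_add]

open Classical in
theorem nilCount_ofFn {T : ℕ} (y : R) (F : Fin T → R) :
    nilCount y (List.ofFn F) = ∑ t : Fin T, if F t = y then 1 else 0 := by
  induction T with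
  | zero => simp [List.ofFn_zero, nilCount]
  | succ T ih =>
    rw [List.ofFn_succ, nilCount_cons, Fin.sum_univ_succ, ih]

theorem C_mul_X_pow_mul (a b : R) (e f : ℕ) :
    (C a * X ^ e) * (C b * X ^ f) = C (a * b) * X ^ (e + f) := by
  rw [show (C a * X ^ e) * (C b * X ^ f) = C a * (X ^ e * C b) * X ^ f by noncomm_ring,
    X_pow_mul,
    show C a * (C b * X ^ e) * X ^ f = (C a * C b) * (X ^ e * X ^ f) by noncomm_ring,
    ← C_mul, ← pow_add]

end Aux


theorem weaklySemicommutative_iff_polynomial (R : Type*) [Ring R]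
    (hA : IsArmendariz R) :
    WeaklySemicommutative R ↔ WeaklySemicommutative (Polynomial R) := by
  constructor
  · -- hard direction
    intro hWS f g hfg h
    classical
    set nf := f.natDegree + 1 with hnf
    set nh := h.natDegree + 1 with hnh
    set ng := g.natDegree + 1 with hng
    let κ := Fin ng × Fin nh × Fin nf
    let ξ : κ → R := fun s => f.coeff (s.2.2 : ℕ) * h.coeff (s.2.1 : ℕ) * g.coeff (s.1 : ℕ)
    let d : κ → ℕ := fun s => (s.2.2 : ℕ) + (s.2.1 : ℕ) + (s.1 : ℕ)
    have hnil : ∀ s : κ, IsNilpotent (ξ s) := fun s =>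
      hWS _ _ (hA f g hfg (s.2.2 : ℕ) (s.1 : ℕ)) (h.coeff (s.2.1 : ℕ))
    have hdec : f * h * g = ∑ s : κ, C (ξ s) * X ^ (d s) := by
      have e1 : (∑ s : κ, C (ξ s) * X ^ d s)
          = ∑ j : Fin ng, ∑ p : Fin nh × Fin nf, C (ξ (j, p)) * X ^ d (j, p) :=
        Fintype.sum_prod_type _
      have e2 : ∀ j : Fin ng, (∑ p : Fin nh × Fin nf, C (ξ (j, p)) * X ^ d (j, p))
          = ∑ k : Fin nh, ∑ i : Fin nf, C (ξ (j, k, i)) * X ^ d (j, k, i) := fun j =>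
        Fintype.sum_prod_type _
      have hf : f = ∑ i : Fin nf, C (f.coeff (i : ℕ)) * X ^ (i : ℕ) := by
        conv_lhs => rw [f.as_sum_range_C_mul_X_pow]
        exact (Fin.sum_univ_eq_sum_range (fun i => C (f.coeff i) * X ^ i) nf).symm
      have hh : h = ∑ k : Fin nh, C (h.coeff (k : ℕ)) * X ^ (k : ℕ) := by
        conv_lhs => rw [h.as_sum_range_C_mul_X_pow]
        exact (Fin.sum_univ_eq_sum_range (fun k => C (h.coeff k) * X ^ k) nh).symm
      have hg : g = ∑ j : Fin ng, C (g.coeff (j : ℕ)) * X ^ (j : ℕ) := by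
        conv_lhs => rw [g.as_sum_range_C_mul_X_pow]
        exact (Fin.sum_univ_eq_sum_range (fun j => C (g.coeff j) * X ^ j) ng).symm
      rw [e1]
      simp only [e2]
      conv_lhs => rw [hf, hh, hg]
      simp only [Finset.sum_mul, Finset.mul_sum]
      refine Finset.sum_congr rfl fun i _ => Finset.sum_congr rfl fun k _ =>
        Finset.sum_congr rfl fun j _ => ?_
      rw [C_mul_X_pow_mul, C_mul_X_pow_mul]
    let K : κ → ℕ := fun s => (hnil s).choose
    have hK : ∀ s, ξ s ^ K s = 0 := fun s => (hnil s).choose_spec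
    set T := (∑ s : κ, K s) + 1 with hT
    refine ⟨T, ?_⟩
    rw [hdec, sum_pow_ofFn]
    apply Finset.sum_eq_zero
    intro σ _
    have hmap : (List.ofFn fun t => C (ξ (σ t)) * X ^ d (σ t))
        = (List.ofFn fun t => (ξ (σ t), d (σ t))).map (fun p => C p.1 * X ^ p.2) := by
      rw [List.map_ofFn]; rfl
    rw [hmap, prod_map_C_mul_X_pow, List.map_ofFn, List.map_ofFn]
    have hz : (List.ofFn (Prod.fst ∘ fun t => (ξ (σ t), d (σ t)))).prod = 0 := by
      have hcomp : (Prod.fst ∘ fun t => (ξ (σ t), d (σ t))) = fun t => ξ (σ t) := rfl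
      rw [hcomp]
      have hcard : (Finset.univ : Finset (Fin T)).card
          = ∑ s : κ, (Finset.univ.filter fun t => σ t = s).card :=
        Finset.card_eq_sum_card_fiberwise (fun x _ => Finset.mem_univ _)
      have hlt : ∑ s : κ, K s < ∑ s : κ, (Finset.univ.filter fun t => σ t = s).card := by
        rw [← hcard, Finset.card_univ, Fintype.card_fin]
        omega
      obtain ⟨s0, _, hs0⟩ := Finset.exists_lt_of_sum_lt hlt
      have hcnt : K s0 ≤ nilCount (ξ s0) (List.ofFn fun t => ξ (σ t)) := by
        rw [nilCount_ofFn]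
        have hle : (Finset.univ.filter fun t => σ t = s0).card
            ≤ ∑ t : Fin T, if ξ (σ t) = ξ s0 then 1 else 0 := by
          rw [Finset.card_filter]
          apply Finset.sum_le_sum
          intro t _
          split_ifs with h1 h2
          · exact le_refl 1
          · exact absurd (congrArg ξ h1) h2
          · exact Nat.zero_le 1
          · exact le_refl 0
        omega
      refine prod_eq_zero_of_nilCount hA (hK s0) _ (fun z hz => ?_) hcnt
      obtain ⟨t, ht⟩ := List.mem_ofFn.mp hz
      exact ht ▸ hnil (σ t)
    rw [hz, C_0, zero_mul]
  · -- easy direction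
    intro hWS a b hab r
    have hC : (C a : Polynomial R) * C b = 0 := by rw [← C_mul, hab, C_0]
    obtain ⟨n, hn⟩ := hWS (C a) (C b) hC (C r)
    refine ⟨n, ?_⟩
    have he : ((C a * C r * C b : Polynomial R)) = C (a * r * b) := by rw [← C_mul, ← C_mul]
    rw [he, ← C_pow] at hn
    exact C_injective (by rw [hn, C_0])
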